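/- Let p(x) = x^n + Σ_{k=1}^{n-1} p_k x^k + ε be a signed-palindromic real polynomial with ε = (-1)^n, and let S be the unipotent upper-triangular Toeplitz matrix with entries S_{ij} = ε p_{j-i} for i < j. Let Π_ε be the cyclic permutation matrix with Π_ε e_1 = ε e_n and Π_ε e_{k+1} = e_k. Then ε(S + S^T) = p(Π_ε), where p(Π_ε) is the polynomial p evaluated at the matrix Π_ε. -/

import Mathlib

open Matrix

theorem stmt1 (n : ℕ) (hn : 2 ≤ n) (p : ℕ → ℝ)
    (hpal : ∀ k, 1 ≤ k → k ≤ n - 1 → p (n - k) = (-1 : ℝ) ^ n * p k)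
    (S Pe : Matrix (Fin n) (Fin n) ℝ)
    (hS : ∀ i j : Fin n, S i j =
      if i = j then 1 else if i < j then (-1 : ℝ) ^ n * p ((j : ℕ) - (i : ℕ)) else 0)
    (hPe : ∀ i j : Fin n, Pe i j =
      if (i : ℕ) + 1 = (j : ℕ) then 1
      else if (i : ℕ) = n - 1 ∧ (j : ℕ) = 0 then (-1 : ℝ) ^ n else 0) :
    ((-1 : ℝ) ^ n) • (S + Sᵀ) =
      Pe ^ n + ∑ k ∈ Finset.Ioo 0 n, p k • Pe ^ k + ((-1 : ℝ) ^ n) • 1 := by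
  have hn0 : 0 < n := by omega
  have hε2 : ((-1 : ℝ) ^ n) * ((-1 : ℝ) ^ n) = 1 := by
    rw [← pow_add]; exact Even.neg_one_pow ⟨n, rfl⟩
  -- formula for the powers of Pe
  have hpow : ∀ k, k ≤ n → ∀ i j : Fin n,
      (Pe ^ k) i j = if (i : ℕ) + k = (j : ℕ) then 1
        else if (j : ℕ) + n = (i : ℕ) + k then (-1 : ℝ) ^ n else 0 := by
    intro k
    induction k with
    | zero =>
      intro _ i j
      have hi : (i : ℕ) < n := i.isLt
      have hj : (j : ℕ) < n := j.isLt
      simp only [pow_zero, Matrix.one_apply, Nat.add_zero, Fin.ext_iff]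
      split_ifs <;> first | ring1 | (exfalso; omega)
    | succ k ih =>
      intro hk i j
      have hk' : k ≤ n := by omega
      have hi : (i : ℕ) < n := i.isLt
      have hj : (j : ℕ) < n := j.isLt
      rw [pow_succ, Matrix.mul_apply]
      by_cases hj0 : (j : ℕ) = 0
      · rw [Finset.sum_eq_single (⟨n - 1, by omega⟩ : Fin n)]
        · rw [ih hk' i ⟨n - 1, by omega⟩, hPe ⟨n - 1, by omega⟩ j]
          simp only [Fin.val_mk, true_and]
          split_ifs <;> first | ring1 | (exfalso; omega)
        · intro l _ hl'
          have hlv : (l : ℕ) ≠ n - 1 := fun hc => hl' (Fin.ext (by simpa using hc))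
          have hl : (l : ℕ) < n := l.isLt
          rw [ih hk' i l, hPe l j]
          split_ifs <;> first | ring1 | (exfalso; omega)
        · intro h; exact absurd (Finset.mem_univ _) h
      · rw [Finset.sum_eq_single (⟨(j : ℕ) - 1, by omega⟩ : Fin n)]
        · rw [ih hk' i ⟨(j : ℕ) - 1, by omega⟩, hPe ⟨(j : ℕ) - 1, by omega⟩ j]
          simp only [Fin.val_mk, true_and]
          split_ifs <;> first | ring1 | (exfalso; omega)
        · intro l _ hl'
          have hlv : (l : ℕ) ≠ (j : ℕ) - 1 := fun hc => hl' (Fin.ext (by simpa using hc))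
          have hl : (l : ℕ) < n := l.isLt
          rw [ih hk' i l, hPe l j]
          split_ifs <;> first | ring1 | (exfalso; omega)
        · intro h; exact absurd (Finset.mem_univ _) h
  ext i j
  have hi : (i : ℕ) < n := i.isLt
  have hj : (j : ℕ) < n := j.isLt
  simp only [Matrix.smul_apply, Matrix.add_apply, Matrix.transpose_apply, Matrix.one_apply,
    Matrix.sum_apply, hS, hpow n le_rfl, smul_eq_mul]
  have hsum : ∀ k ∈ Finset.Ioo 0 n,
      p k * (Pe ^ k) i j =
        p k * (if (i : ℕ) + k = (j : ℕ) then 1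
          else if (j : ℕ) + n = (i : ℕ) + k then (-1 : ℝ) ^ n else 0) := by
    intro k hk
    rw [Finset.mem_Ioo] at hk
    rw [hpow k (by omega)]
  rw [Finset.sum_congr rfl hsum]
  simp only [Fin.ext_iff, Fin.lt_iff_val_lt_val]
  rcases lt_trichotomy (i : ℕ) (j : ℕ) with hij | hij | hij
  · rw [Finset.sum_eq_single ((j : ℕ) - (i : ℕ))]
    · split_ifs <;>
        first
          | ring1
          | (exfalso; omega)
          | linear_combination p ((j : ℕ) - (i : ℕ)) * hε2
    · intro k hk hkne
      rw [Finset.mem_Ioo] at hk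
      rw [if_neg (by omega), if_neg (by omega)]; ring
    · intro h
      exact absurd (Finset.mem_Ioo.mpr ⟨by omega, by omega⟩) h
  · rw [Finset.sum_eq_zero]
    · split_ifs <;> first | ring1 | (exfalso; omega)
    · intro k hk
      rw [Finset.mem_Ioo] at hk
      rw [if_neg (by omega), if_neg (by omega)]; ring
  · have hp : p ((j : ℕ) + n - (i : ℕ)) = (-1 : ℝ) ^ n * p ((i : ℕ) - (j : ℕ)) := by
      have h := hpal ((i : ℕ) - (j : ℕ)) (by omega) (by omega)
      have heq : n - ((i : ℕ) - (j : ℕ)) = (j : ℕ) + n - (i : ℕ) := by omega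
      rw [heq] at h; exact h
    rw [Finset.sum_eq_single ((j : ℕ) + n - (i : ℕ))]
    · split_ifs <;>
        first
          | ring1
          | (exfalso; omega)
          | (rw [hp]; ring1)
    · intro k hk hkne
      rw [Finset.mem_Ioo] at hk
      rw [if_neg (by omega), if_neg (by omega)]; ring
    · intro h
      exact absurd (Finset.mem_Ioo.mpr ⟨by omega, by omega⟩) h
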